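/- Let m ∈ ℝ and v > 0, and let g(x) = (2πv)^{−1/2} exp(−(x−m)²/(2v)) be the Gaussian density of mean m and variance v with respect to Lebesgue measure on ℝ. Let ρ : ℝ → [0,∞) be any measurable probability density with respect to Lebesgue measure (∫ ρ(x) dx = 1) such that x ↦ x ρ(x) and x ↦ (x−m)² ρ(x) are integrable with ∫ x ρ(x) dx = m and ∫ (x−m)² ρ(x) dx = v, and such that x ↦ ρ(x) log ρ(x) is integrable. Then the entropy of ρ satisfies s(ρ) = ∫ −ρ(x) log ρ(x) dx ≤ (1/2)(1 + log(2πv)), with equality if and only if ρ = g Lebesgue-almost everywhere; the right-hand side is the entropy of the Gaussian density g. In other words, the normal distribution is the generalized Gibbs law, and hence the strict entropy maximizer, among probability densities on ℝ with prescribed mean and variance. -/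

import Mathlib

open MeasureTheory Real Filter

set_option linter.unusedSectionVars false


lemma key_le {t : ℝ} (ht : 0 ≤ t) : t - 1 ≤ t * Real.log t := by
  rcases eq_or_lt_of_le ht with h | h
  · simp [← h]
  · have h1 := Real.log_le_sub_one_of_pos (inv_pos.2 h)
    rw [Real.log_inv] at h1
    have h2 := mul_le_mul_of_nonneg_left h1 h.le
    have h3 : t * t⁻¹ = 1 := mul_inv_cancel₀ h.ne'
    nlinarith

lemma key_lt {t : ℝ} (ht : 0 ≤ t) (hne : t ≠ 1) : t - 1 < t * Real.log t := by
  rcases eq_or_lt_of_le ht with h | h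
  · simp [← h]
  · have h1 := Real.log_lt_sub_one_of_pos (inv_pos.2 h) (by
      simpa [inv_eq_one] using hne)
    rw [Real.log_inv] at h1
    have h2 := mul_lt_mul_of_pos_left h1 h
    have h3 : t * t⁻¹ = 1 := mul_inv_cancel₀ h.ne'
    nlinarith

lemma integrable_sq_exp {b : ℝ} (hb : 0 < b) :
    Integrable (fun x : ℝ => x ^ 2 * Real.exp (-b * x ^ 2)) := by
  have := integrable_rpow_mul_exp_neg_mul_sq hb (s := 2) (by norm_num)
  simpa [Real.rpow_natCast] using this

lemma integral_sq_exp {b : ℝ} (hb : 0 < b) :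
    ∫ x : ℝ, x ^ 2 * Real.exp (-b * x ^ 2) = Real.sqrt (π / b) / (2 * b) := by
  set f : ℝ → ℝ := fun x => x * Real.exp (-b * x ^ 2) with hf
  set f' : ℝ → ℝ := fun x => Real.exp (-b * x ^ 2) - (2*b) * (x ^ 2 * Real.exp (-b * x ^ 2)) with hf'
  have hderiv : ∀ x, HasDerivAt f (f' x) x := by
    intro x
    have h1 : HasDerivAt (fun x : ℝ => -b * x ^ 2) (-b * (2 * x)) x := by
      simpa using ((hasDerivAt_pow 2 x).const_mul (-b))
    have h2 : HasDerivAt (fun x : ℝ => Real.exp (-b * x ^ 2))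
        (Real.exp (-b * x ^ 2) * (-b * (2 * x))) x := h1.exp
    have : HasDerivAt (fun y : ℝ => id y * Real.exp (-b * y ^ 2))
        (1 * Real.exp (-b * x ^ 2) + id x * (Real.exp (-b * x ^ 2) * (-b * (2 * x)))) x :=
      (hasDerivAt_id x).mul h2
    convert this using 1
    · rfl
    simp [f']
    ring
  have hint : Integrable f' :=
    (integrable_exp_neg_mul_sq hb).sub ((integrable_sq_exp hb).const_mul _)
  have htop : Tendsto f atTop (nhds 0) := by
    have ho := rpow_mul_exp_neg_mul_sq_isLittleO_exp_neg hb 1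
    have ho' : f =o[atTop] fun x : ℝ => Real.exp (-(1/2) * x) := by
      refine ho.congr' ?_ (by rfl)
      filter_upwards [eventually_ge_atTop (0:ℝ)] with x hx
      simp [f, Real.rpow_one]
    have hg : Tendsto (fun x : ℝ => Real.exp (-(1/2) * x)) atTop (nhds 0) := by
      have : Tendsto (fun x : ℝ => -(1/2) * x) atTop atBot :=
        (tendsto_const_mul_atBot_of_neg (by norm_num)).2 tendsto_id
      exact Real.tendsto_exp_atBot.comp this
    exact ho'.isBigO.trans_tendsto hg
  have hbot : Tendsto f atBot (nhds 0) := by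
    have h1 : Tendsto (fun x : ℝ => f (-x)) atTop (nhds 0) := by
      have : (fun x : ℝ => f (-x)) = fun x => -f x := by
        funext x; simp [f]
      rw [this]
      simpa using htop.neg
    have := h1.comp tendsto_neg_atBot_atTop
    simpa [Function.comp_def] using this
  have h0 : ∫ x, f' x = 0 - 0 :=
    integral_of_hasDerivAt_of_tendsto hderiv hint hbot htop
  have hsub : ∫ x, f' x
      = (∫ x : ℝ, Real.exp (-b * x ^ 2)) - (2*b) * ∫ x : ℝ, x ^ 2 * Real.exp (-b * x ^ 2) := by
    rw [hf', integral_sub (integrable_exp_neg_mul_sq hb) ((integrable_sq_exp hb).const_mul _),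
      integral_const_mul]
  rw [h0, integral_gaussian] at hsub
  have : (2*b) * ∫ x : ℝ, x ^ 2 * Real.exp (-b * x ^ 2) = Real.sqrt (π / b) := by linarith
  rw [eq_div_iff (by positivity : (2*b) ≠ 0)]
  linarith


section facts
variable {m v : ℝ} (hv : 0 < v) (g : ℝ → ℝ)
  (hg : ∀ x, g x = (2 * π * v) ^ (-(1/2 : ℝ)) * Real.exp (-((x - m) ^ 2) / (2 * v)))

include hv hg

lemma CsqrtOne : ((2 * π * v) ^ (-(1/2 : ℝ))) * Real.sqrt (π / (2 * v)⁻¹) = 1 := by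
  have h2 : (0:ℝ) < 2 * π * v := by positivity
  have : π / (2 * v)⁻¹ = 2 * π * v := by field_simp
  rw [this, Real.sqrt_eq_rpow, Real.rpow_neg h2.le, inv_mul_cancel₀]
  exact (Real.rpow_pos_of_pos h2 _).ne'

lemma g_eq : g = fun x => (fun y : ℝ => ((2 * π * v) ^ (-(1/2 : ℝ))) *
    Real.exp (-(2 * v)⁻¹ * y ^ 2)) (x - m) := by
  funext x
  rw [hg x]
  congr 2
  ring

lemma g_integrable : Integrable g volume := by
  rw [g_eq hv g hg]
  exact ((integrable_exp_neg_mul_sq (by positivity)).const_mul _).comp_sub_right m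

lemma g_one : ∫ x, g x = 1 := by
  rw [g_eq hv g hg, integral_sub_right_eq_self _ m, integral_const_mul,
    integral_gaussian]
  exact CsqrtOne hv g hg

lemma g_sq_eq : (fun x => (x - m) ^ 2 * g x) = fun x => (fun y : ℝ =>
    ((2 * π * v) ^ (-(1/2 : ℝ))) * (y ^ 2 * Real.exp (-(2 * v)⁻¹ * y ^ 2))) (x - m) := by
  funext x
  rw [hg x]
  have : -((x - m) ^ 2) / (2 * v) = -(2 * v)⁻¹ * (x - m) ^ 2 := by ring
  rw [this]
  ring

lemma g_sq_integrable : Integrable (fun x => (x - m) ^ 2 * g x) volume := by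
  rw [g_sq_eq hv g hg]
  exact ((integrable_sq_exp (by positivity)).const_mul _).comp_sub_right m

lemma g_var : ∫ x, (x - m) ^ 2 * g x = v := by
  have H := integral_sub_right_eq_self (μ := volume) (fun y : ℝ =>
    ((2 * π * v) ^ (-(1/2 : ℝ))) * (y ^ 2 * Real.exp (-(2 * v)⁻¹ * y ^ 2))) m
  rw [g_sq_eq hv g hg, H, integral_const_mul,
    integral_sq_exp (by positivity : (0:ℝ) < (2 * v)⁻¹)]
  have h1 := CsqrtOne (m := m) hv g hg
  have h2 : Real.sqrt (π / (2 * v)⁻¹) / (2 * (2 * v)⁻¹) = Real.sqrt (π / (2 * v)⁻¹) * v := by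
    rw [div_eq_mul_inv]
    congr 1
    field_simp
  rw [h2, ← mul_assoc, h1, one_mul]

end facts


lemma entropy_aux (m v : ℝ) (hv : 0 < v) (g : ℝ → ℝ)
    (hg : ∀ x, g x = (2 * π * v) ^ (-(1/2 : ℝ)) * Real.exp (-((x - m) ^ 2) / (2 * v)))
    (hgint : Integrable g volume) (hgone : ∫ x, g x = 1)
    (ρ : ℝ → ℝ) (hρnonneg : ∀ x, 0 ≤ ρ x)
    (hρint : Integrable ρ volume) (hρone : ∫ x, ρ x = 1)
    (hvint : Integrable (fun x => (x - m) ^ 2 * ρ x) volume)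
    (hvar : ∫ x, (x - m) ^ 2 * ρ x = v)
    (hent : Integrable (fun x => ρ x * Real.log (ρ x)) volume) :
    (∫ x, -(ρ x * Real.log (ρ x))) ≤ (1 / 2) * (1 + Real.log (2 * π * v)) ∧
    ((∫ x, -(ρ x * Real.log (ρ x))) = (1 / 2) * (1 + Real.log (2 * π * v)) ↔
      ρ =ᵐ[volume] g) := by
  have h2πv : (0:ℝ) < 2 * π * v := by positivity
  have hC : (0:ℝ) < (2 * π * v) ^ (-(1/2 : ℝ)) := Real.rpow_pos_of_pos h2πv _
  have hgpos : ∀ x, 0 < g x := by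
    intro x; rw [hg x]; positivity
  have hlogg : ∀ x, Real.log (g x) =
      -(1/2) * Real.log (2 * π * v) - (x - m) ^ 2 / (2 * v) := by
    intro x
    rw [hg x, Real.log_mul hC.ne' (Real.exp_pos _).ne', Real.log_rpow h2πv, Real.log_exp]
    ring
  -- the integral of ρ * log g
  have hρlogg_eq : (fun x => ρ x * Real.log (g x)) =
      fun x => (-(1/2) * Real.log (2 * π * v)) * ρ x - (2 * v)⁻¹ * ((x - m) ^ 2 * ρ x) := by
    funext x; rw [hlogg x]; ring
  have int1 : Integrable (fun x => ρ x * Real.log (g x)) volume := by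
    rw [hρlogg_eq]
    exact (hρint.const_mul _).sub (hvint.const_mul _)
  have I1 : ∫ x, ρ x * Real.log (g x) = -((1 / 2) * (1 + Real.log (2 * π * v))) := by
    rw [hρlogg_eq, integral_sub (hρint.const_mul _) (hvint.const_mul _),
      integral_const_mul, integral_const_mul, hρone, hvar]
    field_simp
    ring
  -- the nonnegative function φ
  set φ : ℝ → ℝ := fun x => ρ x * Real.log (ρ x) - ρ x * Real.log (g x) - ρ x + g x with hφ
  have hφ_eq : ∀ x, φ x = ((ρ x / g x) * Real.log (ρ x / g x) - ρ x / g x + 1) * g x := by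
    intro x
    have hgx := hgpos x
    have hterm : ρ x * Real.log (ρ x) - ρ x * Real.log (g x) =
        ((ρ x / g x) * Real.log (ρ x / g x)) * g x := by
      rcases eq_or_lt_of_le (hρnonneg x) with h | h
      · simp [← h]
      · rw [Real.log_div h.ne' hgx.ne']
        field_simp
    rw [hφ]
    simp only [hterm]
    field_simp
  have hφ0 : ∀ x, 0 ≤ φ x := by
    intro x
    rw [hφ_eq x]
    have := key_le (t := ρ x / g x) (div_nonneg (hρnonneg x) (hgpos x).le)
    have hgx := hgpos x
    nlinarith
  have hφzero : ∀ x, φ x = 0 ↔ ρ x = g x := by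
    intro x
    have hgx := hgpos x
    constructor
    · intro h0
      by_contra hne
      have htne : ρ x / g x ≠ 1 := by
        intro h1
        exact hne (by field_simp at h1; linarith)
      have := key_lt (div_nonneg (hρnonneg x) hgx.le) htne
      rw [hφ_eq x] at h0
      nlinarith
    · intro h
      rw [hφ_eq x, h, div_self hgx.ne']
      simp
  have h1 : Integrable (fun x => ρ x * Real.log (ρ x) - ρ x * Real.log (g x)) volume :=
    hent.sub int1
  have h2 : Integrable (fun x => ρ x * Real.log (ρ x) - ρ x * Real.log (g x) - ρ x) volume :=
    h1.sub hρint
  have hφint : Integrable φ volume := h2.add hgint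
  have Iφ : ∫ x, φ x =
      (∫ x, ρ x * Real.log (ρ x)) + (1 / 2) * (1 + Real.log (2 * π * v)) := by
    rw [hφ]
    rw [integral_add h2 hgint, integral_sub h1 hρint, integral_sub hent int1, I1, hρone, hgone]
    ring
  have hIneg : (∫ x, -(ρ x * Real.log (ρ x))) = -∫ x, ρ x * Real.log (ρ x) :=
    integral_neg _
  have hφnn : 0 ≤ ∫ x, φ x := integral_nonneg hφ0
  constructor
  · rw [hIneg]; linarith [Iφ ▸ hφnn]
  · rw [hIneg]
    constructor
    · intro heq
      have hzero : ∫ x, φ x = 0 := by rw [Iφ]; linarith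
      have := (integral_eq_zero_iff_of_nonneg hφ0 hφint).mp hzero
      filter_upwards [this] with x hx
      exact (hφzero x).mp hx
    · intro hae
      have : φ =ᵐ[volume] (fun _ => 0) := by
        filter_upwards [hae] with x hx
        exact (hφzero x).mpr hx
      have hzero : ∫ x, φ x = 0 := by
        rw [integral_congr_ae this]; simp
      rw [Iφ] at hzero
      linarith


set_option maxHeartbeats 1000000 in
/-- The Gaussian density `g(x) = (2πv)^{-1/2} exp(-(x-m)²/(2v))` is the strict entropy
maximizer among probability densities on `ℝ` (for Lebesgue measure) with mean `m` and
variance `v`: any such density `ρ` has entropy at most `(1/2)(1 + log(2πv))`, with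
equality iff `ρ = g` almost everywhere, and this bound is the entropy of `g`. -/
theorem gaussian_max_entropy
    (m : ℝ) (v : ℝ) (hv : 0 < v)
    (g : ℝ → ℝ)
    (hg : ∀ x, g x = (2 * π * v) ^ (-(1/2 : ℝ)) * Real.exp (-((x - m) ^ 2) / (2 * v)))
    (ρ : ℝ → ℝ) (hρmeas : Measurable ρ) (hρnonneg : ∀ x, 0 ≤ ρ x)
    (hρint : Integrable ρ volume) (hρone : ∫ x, ρ x = 1)
    (hmint : Integrable (fun x => x * ρ x) volume)
    (hmean : ∫ x, x * ρ x = m)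
    (hvint : Integrable (fun x => (x - m) ^ 2 * ρ x) volume)
    (hvar : ∫ x, (x - m) ^ 2 * ρ x = v)
    (hent : Integrable (fun x => ρ x * Real.log (ρ x)) volume) :
    (∫ x, -(ρ x * Real.log (ρ x))) ≤ (1 / 2) * (1 + Real.log (2 * π * v)) ∧
    ((∫ x, -(ρ x * Real.log (ρ x))) = (1 / 2) * (1 + Real.log (2 * π * v)) ↔
      ρ =ᵐ[volume] g) ∧
    (∫ x, -(g x * Real.log (g x))) = (1 / 2) * (1 + Real.log (2 * π * v)) := by
  have h2πv : (0:ℝ) < 2 * π * v := by positivity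
  have hC : (0:ℝ) < (2 * π * v) ^ (-(1/2 : ℝ)) := Real.rpow_pos_of_pos h2πv _
  have hgint := g_integrable hv g hg
  have hgone := g_one hv g hg
  have hgsqint := g_sq_integrable hv g hg
  have hgvar := g_var hv g hg
  have hgnonneg : ∀ x, 0 ≤ g x := fun x => by rw [hg x]; positivity
  have hglogg : (fun x => g x * Real.log (g x)) =
      fun x => (-(1/2) * Real.log (2 * π * v)) * g x - (2 * v)⁻¹ * ((x - m) ^ 2 * g x) := by
    funext x
    have hlg : Real.log (g x) = -(1/2) * Real.log (2 * π * v) - (x - m) ^ 2 / (2 * v) := by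
      rw [hg x, Real.log_mul hC.ne' (Real.exp_pos _).ne', Real.log_rpow h2πv, Real.log_exp]
      ring
    rw [hlg]; ring
  have hgent : Integrable (fun x => g x * Real.log (g x)) volume := by
    rw [hglogg]
    exact (hgint.const_mul _).sub (hgsqint.const_mul _)
  obtain ⟨hle, hiff⟩ := entropy_aux m v hv g hg hgint hgone ρ hρnonneg hρint hρone
    hvint hvar hent
  obtain ⟨_, hiffg⟩ := entropy_aux m v hv g hg hgint hgone g hgnonneg hgint hgone
    hgsqint hgvar hgent
  exact ⟨hle, hiff, hiffg.mpr (Filter.EventuallyEq.rfl)⟩
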